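/- A subset U of {x_{ij} : 1 ≤ i ≤ n, 1 ≤ j ≤ 3} is a face of the complex Δₙ if and only if U = B ∪ C where B contains at most one element x_{ij} for each i (i.e., B is independent in the direct sum of n copies of the rank-1 uniform matroid on 3 elements) and C has at most 3 elements (independent in the uniform matroid U_{3,3n}). Consequently Δₙ is a matroid of rank n+3, equal to the matroid union U_{3,3n} ∨ U_{1,3}^{⊕n}. -/

import Mathlib

open Finset

/-- The profile of a subset `U` of the ground set `{x_{ij}} = Fin n × Fin 3`:
`profile U i` is the number of `j` with `x_{ij} ∈ U`. -/
def profileOf {n : ℕ} (U : Finset (Fin n × Fin 3)) (i : Fin n) : ℕ :=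
  (U.filter (fun p => p.1 = i)).card

/-- A profile is *bad* if, up to permutation of the indices, it equals
`(3,3,0,…,0)`, `(3,2,2,0,…,0)` or `(2,2,2,2,0,…,0)`. -/
def IsBadProfile {n : ℕ} (c : Fin n → ℕ) : Prop :=
  (∃ i j, i ≠ j ∧ c i = 3 ∧ c j = 3 ∧ ∀ k, k ≠ i → k ≠ j → c k = 0) ∨
  (∃ i j k, i ≠ j ∧ i ≠ k ∧ j ≠ k ∧ c i = 3 ∧ c j = 2 ∧ c k = 2 ∧
    ∀ l, l ≠ i → l ≠ j → l ≠ k → c l = 0) ∨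
  (∃ i j k l, i ≠ j ∧ i ≠ k ∧ i ≠ l ∧ j ≠ k ∧ j ≠ l ∧ k ≠ l ∧
    c i = 2 ∧ c j = 2 ∧ c k = 2 ∧ c l = 2 ∧
    ∀ m, m ≠ i → m ≠ j → m ≠ k → m ≠ l → c m = 0)

/-- `U` is a face of the simplicial complex `Δₙ`: it contains no (minimal)
nonface, i.e. no subset whose profile is bad. -/
def IsFaceD (n : ℕ) (U : Finset (Fin n × Fin 3)) : Prop :=
  ¬ ∃ W : Finset (Fin n × Fin 3), W ⊆ U ∧ IsBadProfile (profileOf W)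

/-- `U` is a facet (maximal face) of `Δₙ`. -/
def IsFacetD (n : ℕ) (U : Finset (Fin n × Fin 3)) : Prop :=
  IsFaceD n U ∧ ∀ W : Finset (Fin n × Fin 3), IsFaceD n W → U ⊆ W → W = U

/-- A profile is a permutation of `(3,2,1,1,…,1)`. -/
def IsProfile321 {n : ℕ} (c : Fin n → ℕ) : Prop :=
  ∃ i j, i ≠ j ∧ c i = 3 ∧ c j = 2 ∧ ∀ k, k ≠ i → k ≠ j → c k = 1

/-- A profile is a permutation of `(2,2,2,1,…,1)`. -/
def IsProfile2221 {n : ℕ} (c : Fin n → ℕ) : Prop :=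
  ∃ i j k, i ≠ j ∧ i ≠ k ∧ j ≠ k ∧ c i = 2 ∧ c j = 2 ∧ c k = 2 ∧
    ∀ l, l ≠ i → l ≠ j → l ≠ k → c l = 1

/-- A matroid given by its family of independent finite sets. -/
structure FinMatroid (α : Type*) [DecidableEq α] where
  Indep : Finset α → Prop
  indep_empty : Indep ∅
  indep_subset : ∀ ⦃I J : Finset α⦄, Indep J → I ⊆ J → Indep I
  indep_aug : ∀ ⦃I J : Finset α⦄, Indep I → Indep J → I.card < J.card →
    ∃ s ∈ J \ I, Indep (insert s I)

section DeltaAux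

variable {n : ℕ}

/-- Total "excess" of a set: sum over rows of (row size − 1)⁺. -/
def excessOf (U : Finset (Fin n × Fin 3)) : ℕ := ∑ i, (profileOf U i - 1)

lemma profile_mono {U V : Finset (Fin n × Fin 3)} (h : U ⊆ V) (i : Fin n) :
    profileOf U i ≤ profileOf V i :=
  Finset.card_le_card (Finset.filter_subset_filter _ h)

lemma profile_le_three (U : Finset (Fin n × Fin 3)) (i : Fin n) : profileOf U i ≤ 3 := by
  classical
  have h : (U.filter (fun p => p.1 = i)).card ≤ (Finset.univ : Finset (Fin 3)).card := by
    apply Finset.card_le_card_of_injOn Prod.snd (fun a _ => Finset.mem_univ _)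
    intro p hp q hq h2
    simp only [Finset.coe_filter, Set.mem_setOf_eq] at hp hq
    exact Prod.ext (hp.2.trans hq.2.symm) h2
  simpa [profileOf] using h

lemma card_eq_sum_profile (U : Finset (Fin n × Fin 3)) : U.card = ∑ i, profileOf U i :=
  Finset.card_eq_sum_card_fiberwise (fun x _ => Finset.mem_univ x.1)

lemma card_split (U : Finset (Fin n × Fin 3)) :
    U.card = ∑ i, min (profileOf U i) 1 + excessOf U := by
  rw [card_eq_sum_profile, excessOf, ← Finset.sum_add_distrib]
  exact Finset.sum_congr rfl fun i _ => by omega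

lemma profile_filter_rows (U : Finset (Fin n × Fin 3)) (S : Finset (Fin n)) (i : Fin n) :
    profileOf (U.filter (fun p => p.1 ∈ S)) i = if i ∈ S then profileOf U i else 0 := by
  unfold profileOf
  rw [Finset.filter_filter]
  split_ifs with h
  · congr 1
    apply Finset.filter_congr
    intro p _
    constructor
    · rintro ⟨_, h2⟩; exact h2
    · intro h2; exact ⟨h2 ▸ h, h2⟩
  · rw [Finset.card_eq_zero, Finset.filter_eq_empty_iff]
    rintro p _ ⟨h1, h2⟩
    exact h (h2 ▸ h1)

lemma profile_insert_le (s : Fin n × Fin 3) (U : Finset (Fin n × Fin 3)) (i : Fin n) :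
    profileOf (insert s U) i ≤ profileOf U i + (if s.1 = i then 1 else 0) := by
  unfold profileOf
  rw [Finset.filter_insert]
  split_ifs with h
  · exact Finset.card_insert_le _ _
  · simp

lemma excess_insert_le (s : Fin n × Fin 3) (U : Finset (Fin n × Fin 3)) :
    excessOf (insert s U) ≤ excessOf U + 1 := by
  unfold excessOf
  calc ∑ i, (profileOf (insert s U) i - 1)
      ≤ ∑ i, ((profileOf U i - 1) + if s.1 = i then 1 else 0) := by
        apply Finset.sum_le_sum
        intro i _
        have h := profile_insert_le s U i
        split_ifs at h ⊢ <;> omega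
    _ = excessOf U + 1 := by
        rw [Finset.sum_add_distrib]
        simp [excessOf, Finset.sum_ite_eq]

lemma excess_insert_of_empty_row {s : Fin n × Fin 3} {U : Finset (Fin n × Fin 3)}
    (h : profileOf U s.1 = 0) : excessOf (insert s U) ≤ excessOf U := by
  unfold excessOf
  apply Finset.sum_le_sum
  intro i _
  have hle := profile_insert_le s U i
  by_cases hi : s.1 = i
  · subst hi
    have hle' : profileOf (insert s U) s.1 ≤ profileOf U s.1 + 1 := by simpa using hle
    omega
  · rw [if_neg hi] at hle
    omega

lemma excess_mono {U V : Finset (Fin n × Fin 3)} (h : U ⊆ V) : excessOf U ≤ excessOf V :=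
  Finset.sum_le_sum fun i _ => Nat.sub_le_sub_right (profile_mono h i) 1

lemma bad_profile_sum {c : Fin n → ℕ} (h : IsBadProfile c) : 4 ≤ ∑ i, (c i - 1) := by
  rcases h with ⟨i, j, hij, hi, hj, -⟩ | ⟨i, j, k, hij, hik, hjk, hi, hj, hk, -⟩ |
    ⟨i, j, k, l, hij, hik, hil, hjk, hjl, hkl, hi, hj, hk, hl, -⟩
  · have hsub : ({i, j} : Finset (Fin n)) ⊆ Finset.univ := Finset.subset_univ _
    have h1 : ∑ m ∈ ({i, j} : Finset (Fin n)), (c m - 1) ≤ ∑ m, (c m - 1) :=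
      Finset.sum_le_sum_of_subset hsub
    rw [Finset.sum_pair hij] at h1
    omega
  · have h1 : ∑ m ∈ ({i, j, k} : Finset (Fin n)), (c m - 1) ≤ ∑ m, (c m - 1) :=
      Finset.sum_le_sum_of_subset (Finset.subset_univ _)
    rw [Finset.sum_insert (by simp [hij, hik]), Finset.sum_pair hjk] at h1
    omega
  · have h1 : ∑ m ∈ ({i, j, k, l} : Finset (Fin n)), (c m - 1) ≤ ∑ m, (c m - 1) :=
      Finset.sum_le_sum_of_subset (Finset.subset_univ _)
    rw [Finset.sum_insert (by simp [hij, hik, hil]),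
        Finset.sum_insert (by simp [hjk, hjl]), Finset.sum_pair hkl] at h1
    omega

lemma face_of_excess_le {U : Finset (Fin n × Fin 3)} (h : excessOf U ≤ 3) : IsFaceD n U := by
  rintro ⟨W, hWU, hbad⟩
  have h4 : 4 ≤ excessOf W := bad_profile_sum hbad
  have h5 : excessOf W ≤ excessOf U := excess_mono hWU
  omega

lemma four_distinct {α : Type*} [DecidableEq α] {S : Finset α} (h : 4 ≤ S.card) :
    ∃ a ∈ S, ∃ b ∈ S, ∃ c ∈ S, ∃ d ∈ S,
      a ≠ b ∧ a ≠ c ∧ a ≠ d ∧ b ≠ c ∧ b ≠ d ∧ c ≠ d := by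
  obtain ⟨a, ha⟩ := Finset.card_pos.mp (show 0 < S.card by omega)
  have h1 : 3 ≤ (S.erase a).card := by rw [Finset.card_erase_of_mem ha]; omega
  obtain ⟨b, hb⟩ := Finset.card_pos.mp (show 0 < (S.erase a).card by omega)
  have h2 : 2 ≤ ((S.erase a).erase b).card := by rw [Finset.card_erase_of_mem hb]; omega
  obtain ⟨c, hc⟩ := Finset.card_pos.mp (show 0 < ((S.erase a).erase b).card by omega)
  have h3 : 1 ≤ (((S.erase a).erase b).erase c).card := by
    rw [Finset.card_erase_of_mem hc]; omega
  obtain ⟨d, hd⟩ := Finset.card_pos.mp (show 0 < (((S.erase a).erase b).erase c).card by omega)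
  simp only [Finset.mem_erase] at hb hc hd
  exact ⟨a, ha, b, hb.2, c, hc.2.2, d, hd.2.2.2,
    fun h => hb.1 h.symm, fun h => hc.2.1 h.symm, fun h => hd.2.2.1 h.symm,
    fun h => hc.1 h.symm, fun h => hd.2.1 h.symm, fun h => hd.1 h.symm⟩

lemma face_excess {U : Finset (Fin n × Fin 3)} (h : IsFaceD n U) : excessOf U ≤ 3 := by
  classical
  by_contra h4
  push_neg at h4
  apply h
  have hc3 : ∀ i, profileOf U i ≤ 3 := profile_le_three U
  set T := Finset.univ.filter (fun i => profileOf U i = 3) with hTdef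
  set D := Finset.univ.filter (fun i => profileOf U i = 2) with hDdef
  have hsum : excessOf U = 2 * T.card + D.card := by
    rw [hTdef, hDdef, Finset.card_filter, Finset.card_filter, Finset.mul_sum,
      ← Finset.sum_add_distrib]
    apply Finset.sum_congr rfl
    intro i _
    have := hc3 i
    split_ifs <;> omega
  have memT : ∀ i ∈ T, profileOf U i = 3 := fun i hi => (Finset.mem_filter.mp hi).2
  have memD : ∀ i ∈ D, profileOf U i = 2 := fun i hi => (Finset.mem_filter.mp hi).2
  by_cases hA : 2 ≤ T.card
  · obtain ⟨i, hi, j, hj, hij⟩ := Finset.one_lt_card.mp (show 1 < T.card by omega)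
    refine ⟨U.filter (fun p => p.1 ∈ ({i, j} : Finset (Fin n))), Finset.filter_subset _ _,
      Or.inl ⟨i, j, hij, ?_, ?_, ?_⟩⟩
    · rw [profile_filter_rows,
        if_pos (show i ∈ ({i, j} : Finset (Fin n)) by simp)]
      exact memT i hi
    · rw [profile_filter_rows,
        if_pos (show j ∈ ({i, j} : Finset (Fin n)) by simp)]
      exact memT j hj
    · intro k hki hkj
      rw [profile_filter_rows,
        if_neg (show k ∉ ({i, j} : Finset (Fin n)) by simp [hki, hkj])]
  · by_cases hB : T.card = 1
    · obtain ⟨i, hTi⟩ := Finset.card_eq_one.mp hB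
      have hi : i ∈ T := by rw [hTi]; exact Finset.mem_singleton_self i
      have hci : profileOf U i = 3 := memT i hi
      have hD2 : 2 ≤ D.card := by omega
      obtain ⟨j, hj, k, hk, hjk⟩ := Finset.one_lt_card.mp (show 1 < D.card by omega)
      have hcj : profileOf U j = 2 := memD j hj
      have hck : profileOf U k = 2 := memD k hk
      have hij : i ≠ j := fun h => by rw [← h] at hcj; omega
      have hik : i ≠ k := fun h => by rw [← h] at hck; omega
      refine ⟨U.filter (fun p => p.1 ∈ ({i, j, k} : Finset (Fin n))), Finset.filter_subset _ _,
        Or.inr (Or.inl ⟨i, j, k, hij, hik, hjk, ?_, ?_, ?_, ?_⟩)⟩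
      · rw [profile_filter_rows,
          if_pos (show i ∈ ({i, j, k} : Finset (Fin n)) by simp)]
        exact hci
      · rw [profile_filter_rows,
          if_pos (show j ∈ ({i, j, k} : Finset (Fin n)) by simp)]
        exact hcj
      · rw [profile_filter_rows,
          if_pos (show k ∈ ({i, j, k} : Finset (Fin n)) by simp)]
        exact hck
      · intro l hli hlj hlk
        rw [profile_filter_rows,
          if_neg (show l ∉ ({i, j, k} : Finset (Fin n)) by simp [hli, hlj, hlk])]
    · have hD4 : 4 ≤ D.card := by omega
      obtain ⟨i, hi, j, hj, k, hk, l, hl, hij, hik, hil, hjk, hjl, hkl⟩ := four_distinct hD4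
      refine ⟨U.filter (fun p => p.1 ∈ ({i, j, k, l} : Finset (Fin n))), Finset.filter_subset _ _,
        Or.inr (Or.inr ⟨i, j, k, l, hij, hik, hil, hjk, hjl, hkl, ?_, ?_, ?_, ?_, ?_⟩)⟩
      · rw [profile_filter_rows,
          if_pos (show i ∈ ({i, j, k, l} : Finset (Fin n)) by simp)]
        exact memD i hi
      · rw [profile_filter_rows,
          if_pos (show j ∈ ({i, j, k, l} : Finset (Fin n)) by simp)]
        exact memD j hj
      · rw [profile_filter_rows,
          if_pos (show k ∈ ({i, j, k, l} : Finset (Fin n)) by simp)]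
        exact memD k hk
      · rw [profile_filter_rows,
          if_pos (show l ∈ ({i, j, k, l} : Finset (Fin n)) by simp)]
        exact memD l hl
      · intro m hmi hmj hmk hml
        rw [profile_filter_rows,
          if_neg (show m ∉ ({i, j, k, l} : Finset (Fin n)) by simp [hmi, hmj, hmk, hml])]

lemma decomposition_of_excess_le {U : Finset (Fin n × Fin 3)} (hU : excessOf U ≤ 3) :
    ∃ B C : Finset (Fin n × Fin 3), U = B ∪ C ∧
      (∀ i : Fin n, (B.filter (fun p => p.1 = i)).card ≤ 1) ∧ C.card ≤ 3 := by
  classical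
  set B := U.filter (fun p => ∀ q ∈ U, q.1 = p.1 → p.2 ≤ q.2) with hBdef
  have hBU : B ⊆ U := Finset.filter_subset _ _
  refine ⟨B, U \ B, (Finset.union_sdiff_of_subset hBU).symm, ?_, ?_⟩
  · intro i
    apply Finset.card_le_one.mpr
    intro a ha b hb
    simp only [hBdef, Finset.mem_filter] at ha hb
    have h1 : a.2 ≤ b.2 := ha.1.2 b hb.1.1 (hb.2.trans ha.2.symm)
    have h2 : b.2 ≤ a.2 := hb.1.2 a ha.1.1 (ha.2.trans hb.2.symm)
    exact Prod.ext (ha.2.trans hb.2.symm) (le_antisymm h1 h2)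
  · have key : ∀ i, profileOf (U \ B) i ≤ profileOf U i - 1 := by
      intro i
      by_cases h0 : profileOf U i = 0
      · have := profile_mono (Finset.sdiff_subset : U \ B ⊆ U) i
        omega
      · have hB1 : 1 ≤ profileOf B i := by
          obtain ⟨p, hp⟩ := Finset.card_pos.mp (Nat.pos_of_ne_zero h0)
          have hpU : p ∈ U := (Finset.mem_filter.mp hp).1
          have hpi : p.1 = i := (Finset.mem_filter.mp hp).2
          obtain ⟨q, hq, hqmin⟩ := Finset.exists_min_image (U.filter (fun p => p.1 = i))
            (fun p => p.2) ⟨p, hp⟩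
          have hqU : q ∈ U := (Finset.mem_filter.mp hq).1
          have hqi : q.1 = i := (Finset.mem_filter.mp hq).2
          have hqB : q ∈ B := by
            rw [hBdef, Finset.mem_filter]
            refine ⟨hqU, fun r hr hri => ?_⟩
            exact hqmin r (Finset.mem_filter.mpr ⟨hr, hri.trans hqi⟩)
          apply Finset.card_pos.mpr
          exact ⟨q, Finset.mem_filter.mpr ⟨hqB, hqi⟩⟩
        have hBle : profileOf B i ≤ profileOf U i := profile_mono hBU i
        have hsd : profileOf (U \ B) i = profileOf U i - profileOf B i := by
          unfold profileOf
          rw [show (U \ B).filter (fun p => p.1 = i)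
              = U.filter (fun p => p.1 = i) \ B.filter (fun p => p.1 = i) by
            ext x; simp only [Finset.mem_filter, Finset.mem_sdiff]; tauto]
          exact Finset.card_sdiff_of_subset (Finset.filter_subset_filter _ hBU)
        omega
    calc (U \ B).card = ∑ i, profileOf (U \ B) i := card_eq_sum_profile _
      _ ≤ ∑ i, (profileOf U i - 1) := Finset.sum_le_sum fun i _ => key i
      _ ≤ 3 := hU

lemma excess_le_of_decomp {B C : Finset (Fin n × Fin 3)}
    (hB : ∀ i : Fin n, (B.filter (fun p => p.1 = i)).card ≤ 1) (hC : C.card ≤ 3) :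
    excessOf (B ∪ C) ≤ 3 := by
  have key : ∀ i, profileOf (B ∪ C) i - 1 ≤ profileOf C i := by
    intro i
    have h1 : profileOf (B ∪ C) i ≤ profileOf B i + profileOf C i := by
      unfold profileOf
      rw [Finset.filter_union]
      exact Finset.card_union_le _ _
    have h2 : profileOf B i ≤ 1 := hB i
    omega
  calc excessOf (B ∪ C) ≤ ∑ i, profileOf C i := Finset.sum_le_sum fun i _ => key i
    _ = C.card := (card_eq_sum_profile C).symm
    _ ≤ 3 := hC

lemma face_iff_excess {U : Finset (Fin n × Fin 3)} : IsFaceD n U ↔ excessOf U ≤ 3 :=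
  ⟨face_excess, face_of_excess_le⟩

end DeltaAux

/-- `U` is a face of `Δₙ` iff `U = B ∪ C` where `B` contains at most one element
`x_{ij}` per index `i` (independent in `U_{1,3}^{⊕n}`) and `C` has at most `3`
elements (independent in `U_{3,3n}`).  Consequently `Δₙ` is a matroid of rank
`n + 3`, namely the matroid union `U_{3,3n} ∨ U_{1,3}^{⊕n}`. -/
theorem Delta_n_is_matroid_union (n : ℕ) (hn : 4 ≤ n) :
    (∀ U : Finset (Fin n × Fin 3), IsFaceD n U ↔
      ∃ B C : Finset (Fin n × Fin 3), U = B ∪ C ∧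
        (∀ i : Fin n, (B.filter (fun p => p.1 = i)).card ≤ 1) ∧ C.card ≤ 3) ∧
    (∃ M : FinMatroid (Fin n × Fin 3),
      (∀ U, M.Indep U ↔ IsFaceD n U) ∧
      (∀ U : Finset (Fin n × Fin 3), IsFacetD n U → U.card = n + 3)) := by
  classical
  constructor
  · intro U
    rw [face_iff_excess]
    constructor
    · exact decomposition_of_excess_le
    · rintro ⟨B, C, rfl, hB, hC⟩
      exact excess_le_of_decomp hB hC
  · refine ⟨⟨fun U => excessOf U ≤ 3, ?_, ?_, ?_⟩, fun U => face_iff_excess.symm, ?_⟩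
    · simp [excessOf, profileOf]
    · intro I J hJ hIJ
      exact le_trans (excess_mono hIJ) hJ
    · intro I J hI hJ hlt
      by_cases h3 : excessOf I ≤ 2
      · have hex : ∃ s, s ∈ J ∧ s ∉ I := by
          by_contra hcon
          push_neg at hcon
          have := Finset.card_le_card (fun s hs => hcon s hs)
          omega
        obtain ⟨s, hsJ, hsI⟩ := hex
        exact ⟨s, Finset.mem_sdiff.mpr ⟨hsJ, hsI⟩,
          le_trans (excess_insert_le s I) (by omega)⟩
      · have hI3 : excessOf I = 3 := by omega
        by_cases hrow : ∃ s ∈ J, s ∉ I ∧ profileOf I s.1 = 0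
        · obtain ⟨s, hsJ, hsI, h0⟩ := hrow
          exact ⟨s, Finset.mem_sdiff.mpr ⟨hsJ, hsI⟩,
            le_trans (excess_insert_of_empty_row h0) (by omega)⟩
        · exfalso
          push_neg at hrow
          have hmin : ∀ i, min (profileOf J i) 1 ≤ min (profileOf I i) 1 := by
            intro i
            by_cases hJi : profileOf J i = 0
            · simp [hJi]
            · obtain ⟨p, hp⟩ := Finset.card_pos.mp (Nat.pos_of_ne_zero hJi)
              have hpJ : p ∈ J := (Finset.mem_filter.mp hp).1
              have hpi : p.1 = i := (Finset.mem_filter.mp hp).2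
              have hIi : profileOf I i ≠ 0 := by
                by_cases hpI : p ∈ I
                · intro h0
                  have hmem : p ∈ I.filter (fun q => q.1 = i) :=
                    Finset.mem_filter.mpr ⟨hpI, hpi⟩
                  have := Finset.card_pos.mpr ⟨p, hmem⟩
                  unfold profileOf at h0
                  omega
                · have := hrow p hpJ hpI
                  rwa [hpi] at this
              omega
          have h1 : J.card = ∑ i, min (profileOf J i) 1 + excessOf J := card_split J
          have h2 : I.card = ∑ i, min (profileOf I i) 1 + excessOf I := card_split I
          have h3' : ∑ i, min (profileOf J i) 1 ≤ ∑ i, min (profileOf I i) 1 :=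
            Finset.sum_le_sum fun i _ => hmin i
          omega
    · rintro U ⟨hface, hmax⟩
      have he : excessOf U ≤ 3 := face_excess hface
      have hcard : U.card = ∑ i, min (profileOf U i) 1 + excessOf U := card_split U
      have hle : U.card ≤ n + 3 := by
        have h1 : ∑ i, min (profileOf U i) 1 ≤ ∑ _i : Fin n, 1 :=
          Finset.sum_le_sum fun i _ => min_le_right _ _
        simp only [Finset.sum_const, Finset.card_univ, Fintype.card_fin, smul_eq_mul,
          mul_one] at h1
        omega
      by_contra hne
      have hlt : U.card < n + 3 := by omega
      by_cases hzero : ∃ i, profileOf U i = 0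
      · obtain ⟨i, hi0⟩ := hzero
        have hnot : ((i, (0 : Fin 3))) ∉ U := by
          intro hmem
          have hm : ((i, (0 : Fin 3))) ∈ U.filter (fun p => p.1 = i) :=
            Finset.mem_filter.mpr ⟨hmem, rfl⟩
          have := Finset.card_pos.mpr ⟨_, hm⟩
          unfold profileOf at hi0
          omega
        have hface' : IsFaceD n (insert (i, (0 : Fin 3)) U) :=
          face_of_excess_le (le_trans (excess_insert_of_empty_row hi0) he)
        have heq := hmax _ hface' (Finset.subset_insert _ _)
        exact hnot (heq ▸ Finset.mem_insert_self _ _)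
      · push_neg at hzero
        have hsupp : ∑ i, min (profileOf U i) 1 = n := by
          have : ∑ i, min (profileOf U i) 1 = ∑ _i : Fin n, 1 :=
            Finset.sum_congr rfl fun i _ => by have := hzero i; omega
          simpa using this
        have hUne : U ≠ Finset.univ := by
          intro h
          rw [h, Finset.card_univ] at hlt
          simp only [Fintype.card_prod, Fintype.card_fin] at hlt
          omega
        have hex : ∃ p, p ∉ U := by
          by_contra hcon
          push_neg at hcon
          exact hUne (Finset.eq_univ_iff_forall.mpr hcon)
        obtain ⟨p, hp⟩ := hex
        have hex2 : excessOf U ≤ 2 := by omega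
        have hface' : IsFaceD n (insert p U) :=
          face_of_excess_le (le_trans (excess_insert_le p U) (by omega))
        have heq := hmax _ hface' (Finset.subset_insert _ _)
        exact hp (heq ▸ Finset.mem_insert_self _ _)
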